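/- arXiv:1104.4345 — 3 statements merged into one kernel-verified Lean document; each statement's English description precedes it below -/
import Mathlib

section
/- For s ∈ (0,1) define B(s) = s(1−s) ∫_ℝ (1−cos t)/|t|^{1+2s} dt. Then lim_{s→1⁻} B(s) = 1/2 and lim_{s→0⁺} B(s) = 1. -/
open MeasureTheory Filter Set
open scoped ENNReal
open Topology
noncomputable section

lemma integrableOn_rpow_Ioc {r : ℝ} (hr : -1 < r) :
    IntegrableOn (fun t : ℝ => t ^ r) (Ioc 0 1) := by
  have h := intervalIntegral.intervalIntegrable_rpow' (r := r) (a := 0) (b := 1) hr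
  rwa [intervalIntegrable_iff_integrableOn_Ioc_of_le zero_le_one] at h

lemma integral_rpow_Ioc {r : ℝ} (hr : -1 < r) :
    ∫ t in Ioc (0:ℝ) 1, t ^ r = 1 / (r + 1) := by
  rw [← intervalIntegral.integral_of_le zero_le_one, integral_rpow (Or.inl hr),
    Real.one_rpow, Real.zero_rpow (by linarith)]
  ring

lemma contOn_aux {s : ℝ} :
    ContinuousOn (fun t : ℝ => (1 - Real.cos t) / t ^ (1 + 2*s)) (Ioi 0) := by
  apply ContinuousOn.div
  · fun_prop
  · exact continuousOn_id.rpow_const fun x hx => Or.inl (ne_of_gt hx)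
  · intro x hx
    exact ne_of_gt (Real.rpow_pos_of_pos hx _)

lemma intOn_Ioi_mono {q C : ℝ} (hq : 1 < q) {f : ℝ → ℝ}
    (hm : AEStronglyMeasurable f (volume.restrict (Ioi 1)))
    (hb : ∀ t ∈ Ioi (1:ℝ), ‖f t‖ ≤ C * t ^ (-q)) : IntegrableOn f (Ioi 1) := by
  refine Integrable.mono
    ((integrableOn_Ioi_rpow_of_lt (by linarith : -q < -1) one_pos).const_mul C) hm ?_
  rw [ae_restrict_iff' measurableSet_Ioi]
  exact ae_of_all _ fun t ht => (hb t ht).trans (le_abs_self _)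

lemma meas_mul_rpow {h : ℝ → ℝ} (hc : Continuous h) (q : ℝ) :
    AEStronglyMeasurable (fun t : ℝ => h t * t ^ q) (volume.restrict (Ioi 1)) := by
  refine ContinuousOn.aestronglyMeasurable ?_ measurableSet_Ioi
  exact hc.continuousOn.mul (continuousOn_id.rpow_const fun x hx =>
    Or.inl (ne_of_gt (lt_trans one_pos hx)))

lemma cos_intOn {s : ℝ} (hs0 : 0 < s) (hs1 : s < 1) :
    IntegrableOn (fun t : ℝ => Real.cos t * t ^ (-(1 + 2*s))) (Ioi 1) := by
  refine intOn_Ioi_mono (C := 1) (q := 1 + 2*s) (by linarith)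
    (meas_mul_rpow Real.continuous_cos _) fun t ht => ?_
  have ht0 : (0:ℝ) ≤ t := by have := ht.out; linarith
  rw [norm_mul, Real.norm_eq_abs, Real.norm_eq_abs,
    abs_of_nonneg (Real.rpow_nonneg ht0 _), one_mul]
  exact mul_le_of_le_one_left (Real.rpow_nonneg ht0 _) (Real.abs_cos_le_one t)

lemma D_bound {s : ℝ} (hs0 : 0 < s) (hs1 : s < 1) :
    |∫ t in Ioi (1:ℝ), Real.cos t * t ^ (-(1 + 2*s))| ≤ 2 := by
  set p : ℝ := 1 + 2*s with hp
  have hp1 : 1 < p := by simp [hp]; linarith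
  have hp0 : 0 < p := by linarith
  have hcosint : IntegrableOn (fun t : ℝ => Real.cos t * t ^ (-p)) (Ioi 1) :=
    cos_intOn hs0 hs1
  have hsinint : IntegrableOn (fun t : ℝ => Real.sin t * (-p * t ^ (-p - 1))) (Ioi 1) := by
    refine intOn_Ioi_mono (q := p + 1) (by linarith) (C := p) ?_ fun t ht => ?_
    · refine (ContinuousOn.aestronglyMeasurable ?_ measurableSet_Ioi)
      refine Real.continuous_sin.continuousOn.mul (ContinuousOn.mul continuousOn_const ?_)
      exact continuousOn_id.rpow_const fun x hx => Or.inl (ne_of_gt (lt_trans one_pos hx))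
    · have ht0 : (0:ℝ) ≤ t := by have := ht.out; linarith
      have hr : (0:ℝ) ≤ t ^ (-p - 1) := Real.rpow_nonneg ht0 _
      have : -(p+1) = -p - 1 := by ring
      rw [this, norm_mul, norm_mul, Real.norm_eq_abs, Real.norm_eq_abs, Real.norm_eq_abs,
        abs_of_nonneg hr, abs_neg, abs_of_nonneg hp0.le]
      exact mul_le_of_le_one_left (mul_nonneg hp0.le hr) (Real.abs_sin_le_one t)
  have hderiv : ∀ x ∈ Ici (1:ℝ), HasDerivAt (fun t : ℝ => Real.sin t * t ^ (-p))
      (Real.cos x * x ^ (-p) + Real.sin x * (-p * x ^ (-p - 1))) x := by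
    intro x hx
    have hx0 : x ≠ 0 := by have := hx.out; positivity
    exact (Real.hasDerivAt_sin x).mul (Real.hasDerivAt_rpow_const (Or.inl hx0))
  have htend : Tendsto (fun t : ℝ => Real.sin t * t ^ (-p)) atTop (𝓝 0) := by
    apply squeeze_zero_norm' ?_ (tendsto_rpow_neg_atTop hp0)
    filter_upwards [eventually_ge_atTop (1:ℝ)] with t ht
    rw [norm_mul, Real.norm_eq_abs, Real.norm_eq_abs,
      abs_of_nonneg (Real.rpow_nonneg (by linarith) _)]
    exact mul_le_of_le_one_left (Real.rpow_nonneg (by linarith) _) (Real.abs_sin_le_one t)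
  have hFTC := integral_Ioi_of_hasDerivAt_of_tendsto' hderiv (hcosint.add hsinint) htend
  rw [integral_add hcosint hsinint, Real.one_rpow, mul_one, zero_sub] at hFTC
  have hsinval : |∫ t in Ioi (1:ℝ), Real.sin t * (-p * t ^ (-p - 1))| ≤ 1 := by
    have hgint : IntegrableOn (fun t : ℝ => p * t ^ (-p - 1)) (Ioi 1) := by
      have : (-p - 1 : ℝ) < -1 := by linarith
      exact (integrableOn_Ioi_rpow_of_lt this one_pos).const_mul p
    have hb : ∀ᵐ t ∂(volume.restrict (Ioi 1)),
        ‖Real.sin t * (-p * t ^ (-p - 1))‖ ≤ p * t ^ (-p - 1) := by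
      rw [ae_restrict_iff' measurableSet_Ioi]
      refine ae_of_all _ fun t ht => ?_
      have ht0 : (0:ℝ) ≤ t := by have := ht.out; linarith
      have hr : (0:ℝ) ≤ t ^ (-p - 1) := Real.rpow_nonneg ht0 _
      rw [norm_mul, norm_mul, Real.norm_eq_abs, Real.norm_eq_abs, Real.norm_eq_abs,
        abs_of_nonneg hr, abs_neg, abs_of_nonneg hp0.le]
      exact mul_le_of_le_one_left (mul_nonneg hp0.le hr) (Real.abs_sin_le_one t)
    have hval : ∫ t in Ioi (1:ℝ), p * t ^ (-p - 1) = 1 := by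
      rw [MeasureTheory.integral_const_mul]
      rw [integral_Ioi_rpow_of_lt (by linarith : (-p - 1 : ℝ) < -1) one_pos]
      rw [Real.one_rpow]
      field_simp
      rw [show (-p - 1 + 1 : ℝ) = -p by ring, div_neg, neg_neg, div_self hp0.ne']
    calc |∫ t in Ioi (1:ℝ), Real.sin t * (-p * t ^ (-p - 1))|
        ≤ ∫ t in Ioi (1:ℝ), p * t ^ (-p - 1) := norm_integral_le_of_norm_le hgint hb
      _ = 1 := hval
  have hs1' : |Real.sin 1| ≤ 1 := Real.abs_sin_le_one 1
  have : ∫ t in Ioi (1:ℝ), Real.cos t * t ^ (-p)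
      = -Real.sin 1 - ∫ t in Ioi (1:ℝ), Real.sin t * (-p * t ^ (-p - 1)) := by linarith
  rw [this]
  have := abs_sub (a := -Real.sin 1) (b := ∫ t in Ioi (1:ℝ), Real.sin t * (-p * t ^ (-p - 1)))
  calc |(-Real.sin 1) - ∫ t in Ioi (1:ℝ), Real.sin t * (-p * t ^ (-p - 1))|
      ≤ |(-Real.sin 1)| + |∫ t in Ioi (1:ℝ), Real.sin t * (-p * t ^ (-p - 1))| := abs_sub _ _
    _ ≤ 2 := by rw [abs_neg]; linarith

lemma intOn_Ioc_main {s : ℝ} (hs0 : 0 < s) (hs1 : s < 1) :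
    IntegrableOn (fun t : ℝ => (1 - Real.cos t) / t ^ (1 + 2*s)) (Ioc 0 1) := by
  apply Integrable.mono (integrableOn_rpow_Ioc (r := 1 - 2*s) (by linarith))
  · exact ((contOn_aux (s := s)).mono Ioc_subset_Ioi_self).aestronglyMeasurable measurableSet_Ioc
  · rw [ae_restrict_iff' measurableSet_Ioc]
    refine ae_of_all _ fun t ht => ?_
    obtain ⟨ht0, ht1⟩ := ht
    have hp : (0:ℝ) < t ^ (1 + 2*s) := Real.rpow_pos_of_pos ht0 _
    have h1 : 0 ≤ 1 - Real.cos t := by have := Real.cos_le_one t; linarith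
    have h2 : 1 - Real.cos t ≤ t ^ ((2:ℝ)) := by
      rw [show ((2:ℝ)) = ((2:ℕ):ℝ) by norm_num, Real.rpow_natCast]
      have hc := Real.one_sub_sq_div_two_le_cos (x := t)
      nlinarith [sq_nonneg t]
    have hpow : t ^ ((2:ℝ)) / t ^ (1 + 2*s) = t ^ (1 - 2*s) := by
      rw [← Real.rpow_sub ht0]; congr 1; ring
    rw [Real.norm_eq_abs, Real.norm_eq_abs, abs_of_nonneg (div_nonneg h1 hp.le),
      abs_of_nonneg (Real.rpow_nonneg ht0.le _)]
    calc (1 - Real.cos t) / t ^ (1 + 2*s) ≤ t ^ ((2:ℝ)) / t ^ (1 + 2*s) :=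
          by gcongr
      _ = t ^ (1 - 2*s) := hpow

lemma E_bound {s : ℝ} (hs0 : 0 < s) (hs1 : s < 1) :
    |∫ t in Ioc (0:ℝ) 1, ((1 - Real.cos t) / t ^ (1 + 2*s) - t ^ (1 - 2*s) / 2)| ≤ 1 := by
  have hmeas : AEStronglyMeasurable
      (fun t : ℝ => (1 - Real.cos t) / t ^ (1 + 2*s) - t ^ (1 - 2*s) / 2)
      (volume.restrict (Ioc 0 1)) := by
    refine ContinuousOn.aestronglyMeasurable ?_ measurableSet_Ioc
    exact ((contOn_aux (s := s)).mono Ioc_subset_Ioi_self).sub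
      ((continuousOn_id.rpow_const fun x hx => Or.inl (ne_of_gt hx.1)).div_const 2)
  have hb : ∀ t ∈ Ioc (0:ℝ) 1,
      ‖(1 - Real.cos t) / t ^ (1 + 2*s) - t ^ (1 - 2*s) / 2‖ ≤ 5/96 := by
    intro t ht
    obtain ⟨ht0, ht1⟩ := ht
    have hp : (0:ℝ) < t ^ (1 + 2*s) := Real.rpow_pos_of_pos ht0 _
    have h2 : t ^ ((2:ℝ)) = t ^ (2:ℕ) := by
      rw [show ((2:ℝ)) = ((2:ℕ):ℝ) by norm_num, Real.rpow_natCast]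
    have h4 : t ^ ((4:ℝ)) = t ^ (4:ℕ) := by
      rw [show ((4:ℝ)) = ((4:ℕ):ℝ) by norm_num, Real.rpow_natCast]
    have hsplit : t ^ (1 - 2*s) / 2 = (t ^ ((2:ℝ)) / 2) / t ^ (1 + 2*s) := by
      have hq : t ^ ((2:ℝ)) / t ^ (1 + 2*s) = t ^ (1 - 2*s) := by
        rw [← Real.rpow_sub ht0]; congr 1; ring
      rw [div_right_comm, hq]
    have hcosb : |Real.cos t - (1 - t ^ (2:ℕ) / 2)| ≤ |t| ^ (4:ℕ) * (5/96) :=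
      Real.cos_bound (by rw [abs_of_pos ht0]; exact ht1)
    rw [abs_of_pos ht0] at hcosb
    have heq : (1 - Real.cos t) / t ^ (1 + 2*s) - t ^ (1 - 2*s) / 2
        = -((Real.cos t - (1 - t ^ (2:ℕ) / 2)) / t ^ (1 + 2*s)) := by
      rw [hsplit, h2, div_sub_div_same]
      ring_nf
    rw [heq, Real.norm_eq_abs, abs_neg, abs_div, abs_of_pos hp]
    rw [div_le_iff₀ hp]
    have ht4 : t ^ (4:ℕ) * (5/96) ≤ 5/96 * t ^ (1 + 2*s) := by
      have h34 : t ^ ((4:ℝ)) ≤ t ^ (1 + 2*s) :=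
        Real.rpow_le_rpow_of_exponent_ge ht0 ht1 (by linarith)
      rw [← h4]; linarith
    exact hcosb.trans ht4
  have := norm_setIntegral_le_of_norm_le_const (μ := volume) (s := Ioc (0:ℝ) 1)
    (by rw [Real.volume_Ioc]; exact ENNReal.ofReal_lt_top) hb
  rw [measureReal_def, Real.volume_Ioc] at this
  simp only [Real.norm_eq_abs] at this
  calc |∫ t in Ioc (0:ℝ) 1, ((1 - Real.cos t) / t ^ (1 + 2*s) - t ^ (1 - 2*s) / 2)|
      ≤ 5/96 * (ENNReal.ofReal (1 - 0)).toReal := this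
    _ ≤ 1 := by rw [ENNReal.toReal_ofReal (by norm_num)]; norm_num

/-- `B(s) = s(1−s) ∫_ℝ (1−cos t)/|t|^{1+2s} dt`. -/
def Bfun (s : ℝ) : ℝ := s * (1 - s) * ∫ t : ℝ, (1 - Real.cos t) / |t| ^ (1 + 2 * s)

lemma key {s : ℝ} (hs0 : 0 < s) (hs1 : s < 1) :
    |Bfun s - (s/2 + (1-s))| ≤ 12 * (s * (1-s)) := by
  have hIoc := intOn_Ioc_main hs0 hs1
  have hIoi : IntegrableOn (fun t : ℝ => (1 - Real.cos t) / t ^ (1 + 2*s)) (Ioi 1) := by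
    refine intOn_Ioi_mono (C := 2) (q := 1 + 2*s) (by linarith) (((contOn_aux (s := s)).mono
      fun x (hx : x ∈ Ioi (1:ℝ)) => (lt_trans one_pos hx : (0:ℝ) < x)).aestronglyMeasurable measurableSet_Ioi) fun t ht => ?_
    have ht0 : (0:ℝ) < t := lt_trans one_pos ht
    have hp : (0:ℝ) < t ^ (1 + 2*s) := Real.rpow_pos_of_pos ht0 _
    have h1 : 0 ≤ 1 - Real.cos t := by have := Real.cos_le_one t; linarith
    have h2 : 1 - Real.cos t ≤ 2 := by have := Real.neg_one_le_cos t; linarith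
    rw [Real.norm_eq_abs, abs_of_nonneg (div_nonneg h1 hp.le), Real.rpow_neg ht0.le,
      ← div_eq_mul_inv]
    gcongr
  -- whole-line integral as twice the Ioi 0 integral
  have hI : (∫ t : ℝ, (1 - Real.cos t) / |t| ^ (1 + 2*s))
      = 2 * ∫ t in Ioi (0:ℝ), (1 - Real.cos t) / t ^ (1 + 2*s) := by
    have hfun : (fun t : ℝ => (1 - Real.cos t) / |t| ^ (1 + 2*s))
        = (fun t : ℝ => (1 - Real.cos |t|) / |t| ^ (1 + 2*s)) :=
      funext fun t => by rw [Real.cos_abs]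
    rw [hfun]
    exact integral_comp_abs (f := fun u : ℝ => (1 - Real.cos u) / u ^ (1 + 2*s))
  -- split at 1
  have hsplit : (∫ t in Ioi (0:ℝ), (1 - Real.cos t) / t ^ (1 + 2*s))
      = (∫ t in Ioc (0:ℝ) 1, (1 - Real.cos t) / t ^ (1 + 2*s))
        + ∫ t in Ioi (1:ℝ), (1 - Real.cos t) / t ^ (1 + 2*s) := by
    rw [← Ioc_union_Ioi_eq_Ioi (zero_le_one (α := ℝ))]
    exact setIntegral_union Ioc_disjoint_Ioi_same measurableSet_Ioi hIoc hIoi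
  -- the Ioc part
  have hrint : IntegrableOn (fun t : ℝ => t ^ (1 - 2*s) / 2) (Ioc 0 1) :=
    (integrableOn_rpow_Ioc (by linarith)).div_const 2
  set E := ∫ t in Ioc (0:ℝ) 1, ((1 - Real.cos t) / t ^ (1 + 2*s) - t ^ (1 - 2*s) / 2) with hEdef
  have hA : (∫ t in Ioc (0:ℝ) 1, (1 - Real.cos t) / t ^ (1 + 2*s))
      = 1 / (2*(2 - 2*s)) + E := by
    rw [hEdef, integral_sub hIoc hrint, integral_div, integral_rpow_Ioc (by linarith : (-1:ℝ) < 1 - 2*s),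
      show (1 - 2*s + 1 : ℝ) = 2 - 2*s by ring]
    have hc : (1:ℝ)/(2*(2-2*s)) = 1/(2-2*s)/2 := by rw [div_div]; congr 1; ring
    linarith [hc]
  -- the Ioi part
  set D := ∫ t in Ioi (1:ℝ), Real.cos t * t ^ (-(1 + 2*s)) with hDdef
  have hpowint : IntegrableOn (fun t : ℝ => t ^ (-(1 + 2*s))) (Ioi 1) :=
    integrableOn_Ioi_rpow_of_lt (by linarith) one_pos
  have hC : (∫ t in Ioi (1:ℝ), (1 - Real.cos t) / t ^ (1 + 2*s)) = 1/(2*s) - D := by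
    have hcong : EqOn (fun t : ℝ => (1 - Real.cos t) / t ^ (1 + 2*s))
        (fun t : ℝ => t ^ (-(1 + 2*s)) - Real.cos t * t ^ (-(1 + 2*s))) (Ioi 1) := by
      intro t ht
      have ht0 : (0:ℝ) < t := lt_trans one_pos ht
      have hp : (0:ℝ) < t ^ (1 + 2*s) := Real.rpow_pos_of_pos ht0 _
      simp only
      rw [Real.rpow_neg ht0.le]
      field_simp
    rw [setIntegral_congr_fun measurableSet_Ioi hcong,
      integral_sub hpowint (cos_intOn hs0 hs1),
      integral_Ioi_rpow_of_lt (by linarith) one_pos, Real.one_rpow, hDdef]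
    congr 1
    rw [show (-(1 + 2*s) + 1 : ℝ) = -(2*s) by ring]
    field_simp
  -- assemble
  have hBeq : Bfun s = s/2 + (1 - s) + 2*s*(1-s)*(E - D) := by
    rw [Bfun, hI, hsplit, hA, hC]
    have h1 : (2 : ℝ) - 2*s ≠ 0 := by linarith
    have h2 : (s : ℝ) ≠ 0 := ne_of_gt hs0
    have h3 : (1 : ℝ) - s ≠ 0 := by linarith
    field_simp
    ring
  rw [hBeq, show s/2 + (1 - s) + 2*s*(1-s)*(E - D) - (s/2 + (1-s)) = (2*s*(1-s))*(E - D) by ring,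
    abs_mul, abs_of_nonneg (by nlinarith : (0:ℝ) ≤ 2*s*(1-s))]
  have hEb : |E| ≤ 1 := E_bound hs0 hs1
  have hDb : |D| ≤ 2 := D_bound hs0 hs1
  have h3 : |E - D| ≤ 3 := (abs_sub E D).trans (by linarith)
  nlinarith [mul_le_mul_of_nonneg_left h3 (show (0:ℝ) ≤ 2*s*(1-s) by nlinarith)]

/-- `B(s) → 1/2` as `s → 1⁻` and `B(s) → 1` as `s → 0⁺`. -/
theorem Bfun_limits :
    Tendsto Bfun (nhdsWithin 1 (Set.Iio 1)) (nhds (1 / 2)) ∧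
    Tendsto Bfun (nhdsWithin 0 (Set.Ioi 0)) (nhds 1) := by
  have hcontφ : Continuous (fun s : ℝ => s/2 + (1 - s)) := by continuity
  have hcontg : Continuous (fun s : ℝ => 12 * (s * (1 - s))) := by continuity
  constructor
  · have hmem : Ioo (0:ℝ) 1 ∈ nhdsWithin 1 (Iio 1) :=
      Ioo_mem_nhdsLT_of_mem ⟨zero_lt_one, le_refl 1⟩
    have h2 : Tendsto (fun s : ℝ => Bfun s - (s/2 + (1-s))) (nhdsWithin 1 (Iio 1)) (nhds 0) := by
      refine squeeze_zero_norm' (a := fun s : ℝ => 12 * (s * (1 - s))) ?_ ?_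
      · filter_upwards [hmem] with s hs
        exact key hs.1 hs.2
      · have h := hcontg.tendsto 1
        norm_num at h
        exact h.mono_left nhdsWithin_le_nhds
    have h1 : Tendsto (fun s : ℝ => s/2 + (1-s)) (nhdsWithin 1 (Iio 1)) (nhds (1/2)) := by
      have h := hcontφ.tendsto 1
      norm_num at h
      exact h.mono_left nhdsWithin_le_nhds
    have h := h2.add h1
    norm_num at h
    simpa using h
  · have hmem : Ioo (0:ℝ) 1 ∈ nhdsWithin 0 (Ioi 0) :=
      Ioo_mem_nhdsGT_of_mem ⟨le_refl 0, zero_lt_one⟩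
    have h2 : Tendsto (fun s : ℝ => Bfun s - (s/2 + (1-s))) (nhdsWithin 0 (Ioi 0)) (nhds 0) := by
      refine squeeze_zero_norm' (a := fun s : ℝ => 12 * (s * (1 - s))) ?_ ?_
      · filter_upwards [hmem] with s hs
        exact key hs.1 hs.2
      · have h := hcontg.tendsto 0
        norm_num at h
        exact h.mono_left nhdsWithin_le_nhds
    have h1 : Tendsto (fun s : ℝ => s/2 + (1-s)) (nhdsWithin 0 (Ioi 0)) (nhds 1) := by
      have h := hcontφ.tendsto 0
      norm_num at h
      exact h.mono_left nhdsWithin_le_nhds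
    have h := h2.add h1
    norm_num at h
    simpa using h
end
end

section
/- Fix x ∈ ℝⁿ, p ∈ [1,∞), s ∈ (0,1), and let E ⊂ ℝⁿ be a measurable set of finite positive Lebesgue measure. Then ∫_{ℝⁿ∖E} |x−y|^{−n−sp} dy ≥ C |E|^{−sp/n} for a constant C = C(n,p,s) > 0. -/
open MeasureTheory Filter Set
open Metric
open scoped ENNReal
noncomputable section

/-- For `p ∈ [1,∞)`, `s ∈ (0,1)`, `x ∈ ℝⁿ` and any measurable `E ⊂ ℝⁿ` of finite positive
measure, `∫_{∁E} |x−y|^{−n−sp} dy ≥ C |E|^{−sp/n}` with `C = C(n,p,s) > 0`. -/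
theorem integral_compl_ge (n : ℕ) (hn : 0 < n) (p s : ℝ) (hp : 1 ≤ p) (hs : 0 < s)
    (hs1 : s < 1) :
    ∃ C : ℝ, 0 < C ∧
      ∀ (x : EuclideanSpace ℝ (Fin n)) (E : Set (EuclideanSpace ℝ (Fin n))),
        MeasurableSet E → volume E ≠ 0 → volume E ≠ ⊤ →
        ENNReal.ofReal (C * (volume E).toReal ^ (-(s * p) / (n : ℝ)))
          ≤ ∫⁻ y in Eᶜ, ENNReal.ofReal (‖x - y‖ ^ (-((n : ℝ) + s * p))) := by
  have : Nontrivial (EuclideanSpace ℝ (Fin n)) := by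
    have : Nonempty (Fin n) := ⟨⟨0, hn⟩⟩
    infer_instance
  set ωE : ℝ≥0∞ := volume (ball (0 : EuclideanSpace ℝ (Fin n)) 1) with hωE
  have hω0 : ωE ≠ 0 := (measure_ball_pos _ _ one_pos).ne'
  have hωt : ωE ≠ ⊤ := measure_ball_lt_top.ne
  set ω : ℝ := ωE.toReal with hω
  have hωpos : 0 < ω := ENNReal.toReal_pos hω0 hωt
  have hωr : ENNReal.ofReal ω = ωE := ENNReal.ofReal_toReal hωt
  set a : ℝ := (n : ℝ) + s * p with ha_def
  have hsp : 0 < s * p := mul_pos hs (lt_of_lt_of_le one_pos hp)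
  have hnR : (0 : ℝ) < n := by exact_mod_cast hn
  have ha : 0 < a := by positivity
  have h2 : (1 : ℝ) < 2 ^ (n : ℝ) := by
    apply Real.one_lt_rpow_iff_of_pos (by norm_num) |>.mpr
    exact Or.inl ⟨by norm_num, hnR⟩
  refine ⟨2 ^ (-a) * (2 ^ (n : ℝ) - 1) * ω ^ (1 + s * p / (n : ℝ)),
    mul_pos (mul_pos (Real.rpow_pos_of_pos two_pos _) (by linarith))
      (Real.rpow_pos_of_pos hωpos _), ?_⟩
  intro x E hE hE0 hEt
  set m : ℝ := (volume E).toReal with hm_def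
  have hm : 0 < m := ENNReal.toReal_pos hE0 hEt
  set ρ : ℝ := (m / ω) ^ (1 / (n : ℝ)) with hρ_def
  have hρ : 0 < ρ := Real.rpow_pos_of_pos (by positivity) _
  have hρn : ρ ^ (n : ℝ) = m / ω := by
    rw [hρ_def, ← Real.rpow_mul (by positivity),
      one_div_mul_cancel hnR.ne', Real.rpow_one]
  set B : Set (EuclideanSpace ℝ (Fin n)) := ball x ρ with hB_def
  have hBmeas : MeasurableSet B := measurableSet_ball
  have hfinrank : Module.finrank ℝ (EuclideanSpace ℝ (Fin n)) = n := finrank_euclideanSpace_fin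
  have hBvol : volume B = volume E := by
    rw [hB_def, Measure.addHaar_ball volume x hρ.le, hfinrank, ← hωE,
      ← Real.rpow_natCast ρ n, hρn, ← hωr, ← ENNReal.ofReal_mul (by positivity),
      div_mul_cancel₀ _ hωpos.ne', ENNReal.ofReal_toReal hEt]
  have hBfin : volume B ≠ ⊤ := by rw [hBvol]; exact hEt
  -- equality of crescents
  have hswap : volume (Eᶜ ∩ B) = volume (E ∩ Bᶜ) := by
    have h1 : volume (B ∩ E) + volume (B \ E) = volume B := measure_inter_add_diff B hE
    have h2 : volume (E ∩ B) + volume (E \ B) = volume E := measure_inter_add_diff E hBmeas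
    rw [inter_comm] at h1
    rw [hBvol] at h1
    rw [← h2] at h1
    have hfin : volume (E ∩ B) ≠ ⊤ := (lt_of_le_of_lt (measure_mono inter_subset_left)
      (lt_top_iff_ne_top.mpr hEt)).ne
    have h3 := ENNReal.add_right_inj hfin |>.mp h1
    rw [diff_eq, diff_eq, inter_comm B] at h3
    exact h3
  set f : EuclideanSpace ℝ (Fin n) → ℝ≥0∞ := fun y => ENNReal.ofReal (‖x - y‖ ^ (-a)) with hf_def
  have hfmeas : Measurable f := by
    rw [hf_def]; fun_prop
  -- lower bound for f on the complement of E intersect B: f ≥ ρ^{-a} a.e.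
  have key1 : ENNReal.ofReal (ρ ^ (-a)) * volume (Eᶜ ∩ B) ≤ ∫⁻ y in Eᶜ ∩ B, f y := by
    rw [← setLIntegral_const]
    apply setLIntegral_mono_ae hfmeas.aemeasurable
    have hxne : ∀ᵐ y ∂(volume : Measure (EuclideanSpace ℝ (Fin n))), y ≠ x := by
      have : volume ({x} : Set (EuclideanSpace ℝ (Fin n))) = 0 := measure_singleton x
      filter_upwards [measure_eq_zero_iff_ae_notMem.mp this] with y hy
      simpa using hy
    filter_upwards [hxne] with y hy hyB
    have hnorm : 0 < ‖x - y‖ := by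
      simp only [norm_pos_iff, sub_ne_zero]
      exact fun h => hy h.symm
    have hlt : ‖x - y‖ ≤ ρ := by
      have := hyB.2
      rw [hB_def, mem_ball, dist_eq_norm] at this
      rw [← norm_neg, neg_sub]
      exact this.le
    exact ENNReal.ofReal_le_ofReal (Real.rpow_le_rpow_of_nonpos hnorm hlt (neg_nonpos.mpr ha.le))
  -- upper bound for f on Bᶜ: f ≤ ρ^{-a}
  have key2 : ∀ y ∈ Bᶜ, f y ≤ ENNReal.ofReal (ρ ^ (-a)) := by
    intro y hy
    have hge : ρ ≤ ‖x - y‖ := by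
      rw [hB_def, mem_compl_iff, mem_ball, not_lt, dist_eq_norm] at hy
      rwa [← norm_neg, neg_sub]
    exact ENNReal.ofReal_le_ofReal (Real.rpow_le_rpow_of_nonpos hρ hge (neg_nonpos.mpr ha.le))
  -- splitting
  have split : ∀ (S : Set (EuclideanSpace ℝ (Fin n))), MeasurableSet S →
      ∫⁻ y in S, f y = (∫⁻ y in S ∩ B, f y) + ∫⁻ y in S ∩ Bᶜ, f y := by
    intro S hS
    rw [← lintegral_add_compl (f := f) (μ := volume.restrict S) hBmeas,
      Measure.restrict_restrict hBmeas, Measure.restrict_restrict hBmeas.compl,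
      inter_comm, inter_comm Bᶜ]
  -- step 2: ∫_{Bᶜ} f ≤ ∫_{Eᶜ} f
  have step2 : ∫⁻ y in Bᶜ, f y ≤ ∫⁻ y in Eᶜ, f y := by
    have splitB : ∫⁻ y in Bᶜ, f y
        = (∫⁻ y in Bᶜ ∩ E, f y) + ∫⁻ y in Bᶜ ∩ Eᶜ, f y := by
      rw [← lintegral_add_compl (f := f) (μ := volume.restrict Bᶜ) hE,
        Measure.restrict_restrict hE, Measure.restrict_restrict hE.compl,
        inter_comm, inter_comm Eᶜ]
    rw [splitB, split Eᶜ hE.compl]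
    gcongr ?_ + ?_
    · calc ∫⁻ y in Bᶜ ∩ E, f y
          ≤ ENNReal.ofReal (ρ ^ (-a)) * volume (Bᶜ ∩ E) := by
            rw [← setLIntegral_const]
            exact setLIntegral_mono' (hBmeas.compl.inter hE)
              (fun y hy => key2 y hy.1)
        _ = ENNReal.ofReal (ρ ^ (-a)) * volume (Eᶜ ∩ B) := by
            rw [inter_comm, ← hswap]
        _ ≤ ∫⁻ y in Eᶜ ∩ B, f y := key1
    · rw [inter_comm]
  -- step 3: lower bound for ∫_{Bᶜ} f via annulus
  have hsub : closedBall x (2 * ρ) \ B ⊆ Bᶜ := fun y hy => hy.2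
  have annvol : volume (closedBall x (2 * ρ) \ B)
      = ENNReal.ofReal (((2 * ρ) ^ (n : ℝ) - ρ ^ (n : ℝ)) * ω) := by
    have hBsub : B ⊆ closedBall x (2 * ρ) :=
      ball_subset_closedBall.trans (closedBall_subset_closedBall (by linarith))
    rw [measure_diff hBsub hBmeas.nullMeasurableSet hBfin, hB_def,
      Measure.addHaar_closedBall volume x (by positivity),
      Measure.addHaar_ball volume x hρ.le, hfinrank, ← hωE, ← hωr,
      ← ENNReal.ofReal_mul (by positivity), ← ENNReal.ofReal_mul (by positivity),
      ← ENNReal.ofReal_sub _ (by positivity), ← Real.rpow_natCast (2*ρ) n,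
      ← Real.rpow_natCast ρ n, sub_mul]
  have step3 : ENNReal.ofReal ((2 * ρ) ^ (-a) * (((2 * ρ) ^ (n : ℝ) - ρ ^ (n : ℝ)) * ω))
      ≤ ∫⁻ y in Bᶜ, f y := by
    calc ENNReal.ofReal ((2 * ρ) ^ (-a) * (((2 * ρ) ^ (n : ℝ) - ρ ^ (n : ℝ)) * ω))
        = ENNReal.ofReal ((2 * ρ) ^ (-a)) * volume (closedBall x (2 * ρ) \ B) := by
          rw [annvol, ← ENNReal.ofReal_mul (by positivity)]
      _ ≤ ∫⁻ y in closedBall x (2 * ρ) \ B, f y := by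
          rw [← setLIntegral_const]
          apply setLIntegral_mono' (measurableSet_closedBall.diff hBmeas)
          intro y hy
          have hge : ρ ≤ ‖x - y‖ := by
            have := hy.2
            rw [hB_def, mem_ball, not_lt, dist_eq_norm] at this
            rwa [← norm_neg, neg_sub]
          have hle : ‖x - y‖ ≤ 2 * ρ := by
            have := hy.1
            rw [mem_closedBall, dist_comm, dist_eq_norm] at this
            exact this
          exact ENNReal.ofReal_le_ofReal
            (Real.rpow_le_rpow_of_nonpos (by linarith) hle (neg_nonpos.mpr ha.le))
      _ ≤ ∫⁻ y in Bᶜ, f y := lintegral_mono_set hsub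
  refine le_trans ?_ (le_trans step3 (le_trans step2 (le_of_eq rfl)))
  apply ENNReal.ofReal_le_ofReal
  -- final real arithmetic
  have h2ρ : (2 * ρ) ^ (-a) = 2 ^ (-a) * ρ ^ (-a) :=
    Real.mul_rpow (by norm_num) hρ.le
  have h2ρn : (2 * ρ) ^ (n : ℝ) = 2 ^ (n : ℝ) * ρ ^ (n : ℝ) :=
    Real.mul_rpow (by norm_num) hρ.le
  have hρan : ρ ^ (-a) * ρ ^ (n : ℝ) = ρ ^ (-(s * p)) := by
    rw [← Real.rpow_add hρ]; congr 1; rw [ha_def]; ring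
  have hρsp : ρ ^ (-(s * p)) = m ^ (-(s * p) / (n : ℝ)) * ω ^ (s * p / (n : ℝ)) := by
    have e1 : (1 / (n:ℝ)) * -(s * p) = -(s * p) / (n : ℝ) := by ring
    have e2 : -(-(s * p) / (n:ℝ)) = s * p / (n : ℝ) := by ring
    rw [hρ_def, ← Real.rpow_mul (by positivity), e1, Real.div_rpow hm.le hωpos.le,
      div_eq_mul_inv, ← Real.rpow_neg hωpos.le, e2]
  have hω1 : ω ^ (1 + s * p / (n : ℝ)) = ω * ω ^ (s * p / (n : ℝ)) := by
    rw [Real.rpow_add hωpos, Real.rpow_one]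
  rw [h2ρ, h2ρn, hω1]
  have : 2 ^ (-a) * ρ ^ (-a) * ((2 ^ (n:ℝ) * ρ ^ (n:ℝ) - ρ ^ (n:ℝ)) * ω)
      = 2 ^ (-a) * (2 ^ (n:ℝ) - 1) * ω * (ρ ^ (-a) * ρ ^ (n:ℝ)) := by ring
  rw [this, hρan, hρsp]
  ring_nf
  exact le_refl _
end
end

section
/- Let s ∈ (0,1) and p ∈ [1,∞) with sp < n, and set p* = np/(n−sp). Fix T > 1 and let (a_k)_{k∈ℤ} be a bounded, nonnegative, nonincreasing sequence with a_k = 0 for all k ≥ N for some N ∈ ℤ. Then ∑_{k∈ℤ} a_k^{(n−sp)/n} T^k ≤ C ∑_{k∈ℤ, a_k≠0} a_{k+1} a_k^{−sp/n} T^k, for a constant C = C(n,p,s,T) > 0 independent of N and of the sequence. -/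
open MeasureTheory Filter Set
open scoped ENNReal
noncomputable section

/-- Let `s ∈ (0,1)`, `p ∈ [1,∞)` with `sp < n`, and fix `T > 1`. Then there is a constant
`C = C(n,p,s,T) > 0`, independent of the sequence and of `N`, such that for every bounded,
nonnegative, nonincreasing sequence `(a_k)_{k∈ℤ}` with `a_k = 0` for all `k ≥ N`,
`∑_k a_k^{(n−sp)/n} T^k ≤ C ∑_{k : a_k ≠ 0} a_{k+1} a_k^{−sp/n} T^k`. -/
theorem discrete_holder_lemma (n : ℕ) (s p T : ℝ) (hp : 1 ≤ p) (hs : 0 < s) (hs1 : s < 1)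
    (hsp : s * p < n) (hT : 1 < T) :
    ∃ C : ℝ, 0 < C ∧
      ∀ (a : ℤ → ℝ) (N : ℤ) (M : ℝ),
        (∀ k, 0 ≤ a k) → (∀ k, a (k + 1) ≤ a k) → (∀ k, a k ≤ M) →
        (∀ k, N ≤ k → a k = 0) →
        (∑' k : ℤ, ENNReal.ofReal (a k ^ (((n : ℝ) - s * p) / (n : ℝ)) * T ^ k))
          ≤ ENNReal.ofReal C *
            ∑' k : ℤ, ENNReal.ofReal
              (if a k = 0 then 0 else a (k + 1) * a k ^ (-(s * p) / (n : ℝ)) * T ^ k) := by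
  have hp0 : (0:ℝ) < p := lt_of_lt_of_le one_pos hp
  have hsp0 : 0 < s * p := mul_pos hs hp0
  have hn : (0:ℝ) < n := lt_trans hsp0 hsp
  have hexp1 : ((n : ℝ) - s * p) / (n : ℝ) = 1 - s * p / n := by
    field_simp
  have hexp2 : -(s * p) / (n : ℝ) = -(s * p / n) := by
    rw [neg_div]
  set α : ℝ := s * p / n with hαdef
  have hα0 : 0 < α := by positivity
  have hα1 : α < 1 := (div_lt_one hn).2 hsp
  have h1α : 0 < 1 - α := by linarith
  have hT0 : (0:ℝ) < T := lt_trans one_pos hT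
  set lam : ℝ := (T * (2*α) ^ α) ^ ((1:ℝ)/(1-α)) with hlamdef
  have hlam0 : 0 < lam := by
    apply Real.rpow_pos_of_pos
    have : (0:ℝ) < (2*α) ^ α := Real.rpow_pos_of_pos (by positivity) _
    positivity
  set C1 : ℝ := (1-α) * lam with hC1def
  have hC10 : 0 < C1 := by positivity
  refine ⟨2 * C1, by positivity, ?_⟩
  intro a N M ha0 hmono hM hzero
  rw [show (fun k : ℤ => ENNReal.ofReal (a k ^ (((n : ℝ) - s * p) / (n : ℝ)) * T ^ k))
      = fun k : ℤ => ENNReal.ofReal (a k ^ (1 - α) * T ^ k) by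
    funext k; rw [hexp1]]
  rw [show (fun k : ℤ => ENNReal.ofReal
        (if a k = 0 then 0 else a (k + 1) * a k ^ (-(s * p) / (n : ℝ)) * T ^ k))
      = fun k : ℤ => ENNReal.ofReal
        (if a k = 0 then 0 else a (k + 1) * a k ^ (-α) * T ^ k) by
    funext k; rw [hexp2]]
  set F : ℤ → ℝ≥0∞ := fun k => ENNReal.ofReal (a k ^ (1-α) * T ^ k) with hF
  set R : ℤ → ℝ≥0∞ := fun k =>
    ENNReal.ofReal (if a k = 0 then 0 else a (k+1) * a k ^ (-α) * T ^ k) with hR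
  -- pointwise key inequality
  have key : ∀ k : ℤ, F (k+1) ≤ ENNReal.ofReal C1 * R k + ENNReal.ofReal (1/2) * F k := by
    intro k
    have hTk : (0:ℝ) < T ^ k := zpow_pos hT0 k
    rcases eq_or_lt_of_le (ha0 k) with h0 | hpos
    · -- a k = 0, hence a (k+1) = 0
      have hak : a k = 0 := h0.symm
      have hak1 : a (k+1) = 0 := le_antisymm (hak ▸ hmono k) (ha0 (k+1))
      have : F (k+1) = 0 := by
        simp [hF, hak1, Real.zero_rpow (ne_of_gt h1α)]
      rw [this]; exact zero_le
    · have hak : a k ≠ 0 := ne_of_gt hpos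
      set u : ℝ := a (k+1) * a k ^ (-α) * T ^ k with hu
      set v : ℝ := a k ^ (1-α) * T ^ k with hv
      have hak10 : 0 ≤ a (k+1) := ha0 (k+1)
      have hu0 : 0 ≤ u := by
        have h1 : 0 ≤ a k ^ (-α) := Real.rpow_nonneg (ha0 k) (-α)
        positivity
      have hv0 : 0 ≤ v := by
        have h1 : 0 ≤ a k ^ (1-α) := Real.rpow_nonneg (ha0 k) (1-α)
        positivity
      -- identity: a(k+1)^(1-α) * T^(k+1) = T * (u^(1-α) * v^α)
      have e1 : (a k ^ (-α)) ^ (1-α) * (a k ^ (1-α)) ^ α = 1 := by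
        rw [← Real.rpow_mul (ha0 k), ← Real.rpow_mul (ha0 k), ← Real.rpow_add hpos,
          show -α*(1-α) + (1-α)*α = 0 by ring, Real.rpow_zero]
      have e2 : (T^k:ℝ) ^ (1-α) * (T^k:ℝ) ^ α = T^k := by
        rw [← Real.rpow_add hTk, show (1-α)+α = 1 by ring, Real.rpow_one]
      have h1 : u ^ (1-α) = a (k+1) ^ (1-α) * (a k ^ (-α)) ^ (1-α) * (T^k) ^ (1-α) := by
        rw [hu, Real.mul_rpow (by positivity) (le_of_lt hTk),
          Real.mul_rpow hak10 (Real.rpow_nonneg (ha0 k) _)]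
      have h2 : v ^ α = (a k ^ (1-α)) ^ α * (T^k) ^ α := by
        rw [hv, Real.mul_rpow (Real.rpow_nonneg (ha0 k) _) (le_of_lt hTk)]
      have hid : a (k+1) ^ (1-α) * T ^ (k+1) = T * (u ^ (1-α) * v ^ α) := by
        have : T * (u ^ (1-α) * v ^ α)
            = T * ((a (k+1) ^ (1-α) * ((a k ^ (-α)) ^ (1-α) * (a k ^ (1-α)) ^ α)) *
              ((T^k) ^ (1-α) * (T^k) ^ α)) := by
          rw [h1, h2]; ring
        rw [this, e1, e2, zpow_add_one₀ (ne_of_gt hT0)]; ring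
      -- AM-GM
      have h2α : (0:ℝ) < (2*α) ^ α := Real.rpow_pos_of_pos (by positivity) _
      have hl : lam ^ (1-α) = T * (2*α) ^ α := by
        rw [hlamdef, ← Real.rpow_mul (by positivity), one_div,
          inv_mul_cancel₀ (ne_of_gt h1α), Real.rpow_one]
      have hgm : (lam * u) ^ (1-α) * (v / (2*α)) ^ α
          ≤ (1-α) * (lam * u) + α * (v / (2*α)) :=
        Real.geom_mean_le_arith_mean2_weighted (le_of_lt h1α) (le_of_lt hα0)
          (by positivity) (by positivity) (by ring)
      have hlhs : (lam * u) ^ (1-α) * (v / (2*α)) ^ α = T * (u ^ (1-α) * v ^ α) := by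
        rw [Real.mul_rpow (le_of_lt hlam0) hu0, Real.div_rpow hv0 (by positivity), hl]
        field_simp
      have hreal : a (k+1) ^ (1-α) * T ^ (k+1) ≤ C1 * u + (1/2) * v := by
        rw [hid, ← hlhs]
        refine le_trans hgm (le_of_eq ?_)
        rw [hC1def]
        field_simp
      have hrk : R k = ENNReal.ofReal u := by rw [hR]; simp only [if_neg hak]; rfl
      calc F (k+1) = ENNReal.ofReal (a (k+1) ^ (1-α) * T ^ (k+1)) := rfl
        _ ≤ ENNReal.ofReal (C1 * u + (1/2) * v) := ENNReal.ofReal_le_ofReal hreal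
        _ = ENNReal.ofReal (C1 * u) + ENNReal.ofReal ((1/2) * v) :=
            ENNReal.ofReal_add (by positivity) (by positivity)
        _ = ENNReal.ofReal C1 * ENNReal.ofReal u
              + ENNReal.ofReal (1/2) * ENNReal.ofReal v := by
            rw [ENNReal.ofReal_mul (p := C1) (le_of_lt hC10),
              ENNReal.ofReal_mul (p := (1/2:ℝ)) (by norm_num)]
        _ = ENNReal.ofReal C1 * R k + ENNReal.ofReal (1/2) * F k := by rw [hrk]
  -- finiteness of the LHS
  have hM0 : 0 ≤ M := le_trans (ha0 0) (hM 0)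
  have hfin : (∑' k : ℤ, F k) ≠ ⊤ := by
    set i : ℕ → ℤ := fun j => N - 1 - (j:ℤ) with hi_def
    have hi : Function.Injective i := by
      intro j1 j2 h
      simp only [hi_def, sub_right_inj] at h
      exact_mod_cast h
    have hsupp : Function.support F ⊆ Set.range i := by
      intro k hk
      by_cases hkN : N ≤ k
      · exfalso
        apply hk
        simp [hF, hzero k hkN, Real.zero_rpow (ne_of_gt h1α)]
      · push_neg at hkN
        refine ⟨(N - 1 - k).toNat, ?_⟩
        simp only [hi_def]
        rw [Int.toNat_of_nonneg (by omega)]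
        omega
    rw [← hi.tsum_eq hsupp]
    have hgeo : ENNReal.ofReal (1/T) < 1 := by
      rw [← ENNReal.ofReal_one]
      exact ENNReal.ofReal_lt_ofReal_iff_of_nonneg (by positivity) |>.2
        ((div_lt_one hT0).2 hT)
    have hb : ∀ j : ℕ, F (i j)
        ≤ ENNReal.ofReal (M ^ (1-α) * T ^ (N-1)) * (ENNReal.ofReal (1/T)) ^ j := by
      intro j
      have hTj : (0:ℝ) < T ^ (N - 1 - (j:ℤ)) := zpow_pos hT0 _
      have hz : (T:ℝ) ^ (N - 1 - (j:ℤ)) = T ^ (N-1) * (1/T) ^ j := by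
        rw [zpow_sub₀ (ne_of_gt hT0), zpow_natCast, one_div, inv_pow, div_eq_mul_inv]
      have hle : a (i j) ^ (1-α) * T ^ (N - 1 - (j:ℤ))
          ≤ (M ^ (1-α) * T ^ (N-1)) * (1/T) ^ j := by
        rw [hz, ← mul_assoc]
        apply mul_le_mul_of_nonneg_right _ (by positivity)
        apply mul_le_mul_of_nonneg_right _ (le_of_lt (zpow_pos hT0 _))
        exact Real.rpow_le_rpow (ha0 _) (hM _) (le_of_lt h1α)
      calc F (i j) = ENNReal.ofReal (a (i j) ^ (1-α) * T ^ (N - 1 - (j:ℤ))) := rfl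
        _ ≤ ENNReal.ofReal ((M ^ (1-α) * T ^ (N-1)) * (1/T) ^ j) :=
            ENNReal.ofReal_le_ofReal hle
        _ = ENNReal.ofReal (M ^ (1-α) * T ^ (N-1)) * (ENNReal.ofReal (1/T)) ^ j := by
            rw [ENNReal.ofReal_mul (by positivity), ENNReal.ofReal_pow (by positivity)]
    refine ne_top_of_le_ne_top ?_ (ENNReal.tsum_le_tsum hb)
    rw [ENNReal.tsum_mul_left, ENNReal.tsum_geometric]
    refine ENNReal.mul_ne_top ENNReal.ofReal_ne_top ?_
    rw [ENNReal.inv_ne_top]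
    intro h0
    rw [tsub_eq_zero_iff_le] at h0
    exact absurd h0 (not_le.2 hgeo)
  -- summation
  have hshift : (∑' k : ℤ, F (k+1)) = ∑' k : ℤ, F k := (Equiv.addRight (1:ℤ)).tsum_eq F
  have hstep : (∑' k : ℤ, F k)
      ≤ ENNReal.ofReal C1 * (∑' k : ℤ, R k) + ENNReal.ofReal (1/2) * (∑' k : ℤ, F k) := by
    calc (∑' k : ℤ, F k) = ∑' k : ℤ, F (k+1) := hshift.symm
      _ ≤ ∑' k : ℤ, (ENNReal.ofReal C1 * R k + ENNReal.ofReal (1/2) * F k) :=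
          ENNReal.tsum_le_tsum key
      _ = ENNReal.ofReal C1 * (∑' k : ℤ, R k) + ENNReal.ofReal (1/2) * (∑' k : ℤ, F k) := by
          rw [ENNReal.tsum_add, ENNReal.tsum_mul_left, ENNReal.tsum_mul_left]
  -- conclude
  have h12 : ENNReal.ofReal (1/2) * (∑' k : ℤ, F k) = (∑' k : ℤ, F k) / 2 := by
    rw [show ENNReal.ofReal (1/2:ℝ) = 2⁻¹ by
      rw [one_div, ENNReal.ofReal_inv_of_pos (by norm_num)]; norm_num]
    rw [ENNReal.div_eq_inv_mul]
  rw [h12] at hstep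
  have hhalfne : (∑' k : ℤ, F k) / 2 ≠ ⊤ :=
    (ENNReal.div_lt_top hfin (by norm_num)).ne
  have hhalf : (∑' k : ℤ, F k) / 2 ≤ ENNReal.ofReal C1 * (∑' k : ℤ, R k) := by
    have h' : (∑' k : ℤ, F k) / 2 + (∑' k : ℤ, F k) / 2
        ≤ ENNReal.ofReal C1 * (∑' k : ℤ, R k) + (∑' k : ℤ, F k) / 2 := by
      rwa [ENNReal.add_halves]
    exact (ENNReal.add_le_add_iff_right hhalfne).1 h'
  have hfinal : (∑' k : ℤ, F k) ≤ (ENNReal.ofReal C1 * (∑' k : ℤ, R k)) * 2 :=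
    (ENNReal.div_le_iff_le_mul (Or.inl (by norm_num)) (Or.inl (by norm_num))).1 hhalf
  calc (∑' k : ℤ, F k) ≤ (ENNReal.ofReal C1 * (∑' k : ℤ, R k)) * 2 := hfinal
    _ = ENNReal.ofReal (2 * C1) * (∑' k : ℤ, R k) := by
        rw [ENNReal.ofReal_mul (p := (2:ℝ)) (by norm_num), ENNReal.ofReal_ofNat]; ring
end
end
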